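/- Let V and W be rational modules for a simply connected simple algebraic group G over an algebraically closed field of characteristic p > 0, and let v ∈ V ⊗ W be a weakly maximal vector (i.e., a nonzero weight vector annihilated by X_α for all positive roots α, where the hyperalgebra acts on the tensor product via the comultiplication Δ(X_α) = X_α ⊗ 1 + 1 ⊗ X_α). Suppose there exists a positive root α with (1 ⊗ X_α)·v ≠ 0, and let β be maximal among positive roots with (1 ⊗ X_β)·v ≠ 0. Then (1 ⊗ X_β)·v is a weakly maximal vector. -/
import Mathlib


open TensorProduct LinearMap

/-- Let `V`, `W` be rational modules for a simply connected simple
algebraic group in characteristic `p > 0`, viewed as modules for the hyperalgebra: `XV γ`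
(resp. `XW γ`) is the action of the Chevalley generator `X_γ` on `V` (resp. `W`) for
`γ ∈ Φ⁺` (with the convention `X_δ = 0` for `δ ∉ Φ⁺`), satisfying the Chevalley relation
`X_γ X_β = X_β X_γ + c • X_{β+γ}`.  The hyperalgebra acts on `V ⊗ W` through the
comultiplication `Δ(X_γ) = X_γ ⊗ 1 + 1 ⊗ X_γ`, i.e. by `rTensor W (XV γ) + lTensor V (XW γ)`,
and `wt χ` denotes the `χ`-weight space of `V ⊗ W`.  If `v` is a weakly maximal vector (a
nonzero weight vector killed by `Δ(X_γ)` for all `γ ∈ Φ⁺`) of weight `δ`, and `β ∈ Φ⁺` is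
maximal (for the dominance order determined by `Φ⁺`) such that `(1 ⊗ X_β)·v ≠ 0`, then
`(1 ⊗ X_β)·v` is a weakly maximal vector (of weight `δ + β`). -/
theorem stmt3 (k V W X : Type*) [Field k] (p : ℕ) [CharP k p] (hp : 0 < p)
    [AddCommGroup V] [Module k V] [AddCommGroup W] [Module k W]
    [AddCommGroup X]
    (Φpos : Finset X) (hΦ0 : (0 : X) ∉ Φpos)
    (XV : X → Module.End k V) (XW : X → Module.End k W)
    (hXV0 : ∀ δ : X, δ ∉ Φpos → XV δ = 0) (hXW0 : ∀ δ : X, δ ∉ Φpos → XW δ = 0)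
    (hcommV : ∀ γ ∈ Φpos, ∀ β ∈ Φpos, ∃ c : k, XV γ * XV β = XV β * XV γ + c • XV (β + γ))
    (hcommW : ∀ γ ∈ Φpos, ∀ β ∈ Φpos, ∃ c : k, XW γ * XW β = XW β * XW γ + c • XW (β + γ))
    (wt : X → Submodule k (V ⊗[k] W))
    (hwt : ∀ γ ∈ Φpos, ∀ χ : X, ∀ x ∈ wt χ, lTensor V (XW γ) x ∈ wt (χ + γ))
    (v : V ⊗[k] W) (δ : X) (hv0 : v ≠ 0) (hvwt : v ∈ wt δ)
    (hvmax : ∀ γ ∈ Φpos, (rTensor W (XV γ) + lTensor V (XW γ)) v = 0)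
    (β : X) (hβ : β ∈ Φpos) (hβv : lTensor V (XW β) v ≠ 0)
    (hβmax : ∀ γ ∈ Φpos, (∃ c : X → ℕ, γ - β = ∑ η ∈ Φpos, c η • η) → γ ≠ β →
      lTensor V (XW γ) v = 0) :
    lTensor V (XW β) v ≠ 0 ∧ lTensor V (XW β) v ∈ wt (δ + β) ∧
      ∀ γ ∈ Φpos, (rTensor W (XV γ) + lTensor V (XW γ)) (lTensor V (XW β) v) = 0 := by
  classical
  refine ⟨hβv, hwt β hβ δ v hvwt, fun γ hγ => ?_⟩
  obtain ⟨c, hc⟩ := hcommW γ hγ β hβ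
  have hβγ : lTensor V (XW (β + γ)) v = 0 := by
    by_cases h : β + γ ∈ Φpos
    · refine hβmax (β + γ) h ⟨fun η => if η = γ then 1 else 0, ?_⟩ ?_
      · simp only [ite_smul, one_smul, zero_smul]
        rw [Finset.sum_ite_eq' Φpos γ (fun η => η), if_pos hγ]
        abel
      · intro he
        exact hΦ0 (by rwa [show γ = 0 by linear_combination (norm := abel_nf) he] at hγ)
    · rw [hXW0 _ h]
      simp
  have key : lTensor V (XW γ) (lTensor V (XW β) v)
      = lTensor V (XW β) (lTensor V (XW γ) v) + c • lTensor V (XW (β + γ)) v := by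
    rw [← LinearMap.comp_apply, ← lTensor_comp]
    have : XW γ ∘ₗ XW β = (XW γ * XW β : Module.End k W) := rfl
    rw [this, hc]
    simp only [lTensor_add, lTensor_smul, LinearMap.add_apply, LinearMap.smul_apply]
    rw [show (XW β * XW γ : Module.End k W) = XW β ∘ₗ XW γ from rfl, lTensor_comp]
    rfl
  have hr : rTensor W (XV γ) (lTensor V (XW β) v)
      = lTensor V (XW β) (rTensor W (XV γ) v) := by
    rw [← LinearMap.comp_apply, ← LinearMap.comp_apply, rTensor_comp_lTensor,
      lTensor_comp_rTensor]
  have h0 := hvmax γ hγ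
  simp only [LinearMap.add_apply] at h0 ⊢
  rw [hr, key, hβγ, smul_zero, add_zero, ← map_add, h0, map_zero]
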